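/- For every simple digraph G, the allowed path complex of the box product with the unit interval equals the cylinder of the allowed path complex: 𝒜(G □ I) = Cyl(𝒜(G)) as path complexes on V(G) × {0,1}. -/

import Mathlib

/-- The cylinder of a path complex `P` on `V`, a path complex on `V × Bool`
(where `false` plays the role of `0` and `true` of `1`). -/
def CylSet {V : Type*} (P : Set (List V)) : Set (List (V × Bool)) :=
  {q | (∃ p ∈ P, q = p.map (·, false)) ∨
       (∃ p ∈ P, q = p.map (·, true)) ∨
       (∃ p ∈ P, ∃ i < p.length,
          q = (p.take (i + 1)).map (·, false) ++ (p.drop i).map (·, true))}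

/-- The allowed path complex of a digraph: all nonempty directed paths. -/
def allowedPaths {V : Type*} (E : V → V → Prop) : Set (List V) :=
  {p | p ≠ [] ∧ p.Chain' E}

/-- The box product `G □ I` of a digraph with the unit interval `I` (vertices `Bool`
with single edge `false → true`). -/
def boxRel {V : Type*} (E : V → V → Prop) : V × Bool → V × Bool → Prop :=
  fun a b => (a.1 = b.1 ∧ a.2 = false ∧ b.2 = true) ∨ (E a.1 b.1 ∧ a.2 = b.2)

private lemma chain'_map_fixed {V : Type*} (E : V → V → Prop) (b : Bool) {p : List V}
    (hp : p.Chain' E) : (p.map (·, b)).Chain' (boxRel E) := by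
  unfold List.Chain' at hp ⊢
  rw [List.isChain_map]
  exact hp.imp fun _ _ h => Or.inr ⟨h, rfl⟩

private lemma fwd {V : Type*} (E : V → V → Prop) :
    ∀ q : List (V × Bool), q ≠ [] → q.Chain' (boxRel E) →
      q ∈ CylSet (allowedPaths E) := by
  intro q
  induction q with
  | nil => intro h; exact absurd rfl h
  | cons a q ih =>
    intro _ hch
    match q with
    | [] =>
      obtain ⟨v, b⟩ := a
      cases b
      · exact Or.inl ⟨[v], ⟨by simp, List.isChain_singleton v⟩, rfl⟩
      · exact Or.inr (Or.inl ⟨[v], ⟨by simp, List.isChain_singleton v⟩, rfl⟩)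
    | b :: t =>
      unfold List.Chain' at hch
      rw [List.isChain_cons_cons] at hch
      obtain ⟨hab, hch⟩ := hch
      have hmem := ih (by simp) hch
      rcases hmem with ⟨p, ⟨hpne, hpch⟩, heq⟩ | ⟨p, ⟨hpne, hpch⟩, heq⟩ |
        ⟨p, ⟨hpne, hpch⟩, i, hi, heq⟩
      · -- b :: t = p.map (·, false)
        obtain ⟨v, p, rfl⟩ : ∃ v p', p = v :: p' := by
          cases p with
          | nil => exact absurd rfl hpne
          | cons v p' => exact ⟨v, p', rfl⟩
        rw [List.map_cons] at heq
        injection heq with hb ht; subst hb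
        rcases hab with ⟨_, _, h2⟩ | ⟨hE', h2⟩
        · simp at h2
        · obtain ⟨w, bb⟩ := a
          simp only at h2; subst h2
          refine Or.inl ⟨w :: v :: p, ⟨by simp, List.isChain_cons_cons.mpr ⟨hE', hpch⟩⟩, ?_⟩
          simp [ht]
      · -- b :: t = p.map (·, true)
        obtain ⟨v, p, rfl⟩ : ∃ v p', p = v :: p' := by
          cases p with
          | nil => exact absurd rfl hpne
          | cons v p' => exact ⟨v, p', rfl⟩
        rw [List.map_cons] at heq
        injection heq with hb ht; subst hb
        obtain ⟨w, bb⟩ := a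
        rcases hab with ⟨h1, h2, _⟩ | ⟨hE', h2⟩
        · -- flip: w = v, bb = false
          simp only at h1 h2; subst h2
          refine Or.inr (Or.inr ⟨v :: p, ⟨by simp, hpch⟩, 0, by simp, ?_⟩)
          simp [ht, h1]
        · simp only at h2; subst h2
          refine Or.inr (Or.inl ⟨w :: v :: p, ⟨by simp, List.isChain_cons_cons.mpr ⟨hE', hpch⟩⟩, ?_⟩)
          simp [ht]
      · -- mixed
        obtain ⟨v, p, rfl⟩ : ∃ v p', p = v :: p' := by
          cases p with
          | nil => exact absurd rfl hpne
          | cons v p' => exact ⟨v, p', rfl⟩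
        rw [List.take_succ_cons, List.map_cons, List.cons_append] at heq
        injection heq with hb ht; subst hb
        rcases hab with ⟨_, _, h2⟩ | ⟨hE', h2⟩
        · simp at h2
        · obtain ⟨w, bb⟩ := a
          simp only at h2; subst h2
          refine Or.inr (Or.inr ⟨w :: v :: p, ⟨by simp, List.isChain_cons_cons.mpr ⟨hE', hpch⟩⟩,
            i + 1, by simpa using hi, ?_⟩)
          simp only [List.take_succ_cons, List.map_cons, List.cons_append, List.drop_succ_cons]
          rw [ht]

private lemma bwd {V : Type*} (E : V → V → Prop) {q : List (V × Bool)}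
    (hq : q ∈ CylSet (allowedPaths E)) : q ∈ allowedPaths (boxRel E) := by
  rcases hq with ⟨p, ⟨hpne, hpch⟩, rfl⟩ | ⟨p, ⟨hpne, hpch⟩, rfl⟩ |
    ⟨p, ⟨hpne, hpch⟩, i, hi, rfl⟩
  · exact ⟨by simpa using hpne, chain'_map_fixed E false hpch⟩
  · exact ⟨by simpa using hpne, chain'_map_fixed E true hpch⟩
  · constructor
    · have h1 : p.take (i + 1) ≠ [] := by
        intro h
        have hlen := congrArg List.length h
        rw [List.length_take] at hlen
        simp only [List.length_nil] at hlen
        omega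
      intro hcon
      rw [List.append_eq_nil_iff] at hcon
      exact h1 (List.map_eq_nil_iff.mp hcon.1)
    · refine List.isChain_append.mpr ⟨chain'_map_fixed E false (hpch.take _),
        chain'_map_fixed E true (hpch.drop _), ?_⟩
      intro x hx y hy
      have htake : (p.take (i + 1)).getLast? = some p[i] := by
        rw [List.getLast?_eq_getElem?]
        have hlen : (p.take (i + 1)).length = i + 1 := by simp; omega
        rw [hlen]
        simp only [Nat.add_sub_cancel]
        rw [List.getElem?_take_of_succ, List.getElem?_eq_getElem hi]
      have hdrop : (p.drop i).head? = some p[i] := by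
        rw [List.head?_eq_getElem?]
        rw [List.getElem?_drop]
        simp [List.getElem?_eq_getElem hi]
      rw [List.getLast?_map, htake] at hx
      rw [List.head?_map, hdrop] at hy
      simp only [Option.map_some, Option.mem_def, Option.some.injEq] at hx hy
      subst hx; subst hy
      exact Or.inl ⟨rfl, rfl, rfl⟩

/-- For every simple digraph `G`, the allowed path complex of `G □ I`
equals the cylinder of the allowed path complex of `G`. -/
theorem allowed_box_eq_cyl_allowed {V : Type*} (E : V → V → Prop)
    (hE : ∀ v, ¬ E v v) :
    allowedPaths (boxRel E) = CylSet (allowedPaths E) := by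
  ext q
  exact ⟨fun ⟨h1, h2⟩ => fwd E q h1 h2, bwd E⟩
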